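/- If a string P with a period p is a palindrome, the string cP (for a letter c) has p as a period, and the string Pc' (for a letter c') does not have p as a period, then the string S = cPc' is not a palindrome. -/

import Mathlib

/-- A positive integer `p` is a period of `L` if `L[i] = L[i+p]` for all `i ∈ [0, |L| - p)`. -/
def HasPeriod (L : List ℕ) (p : ℕ) : Prop :=
  0 < p ∧ ∀ i, i + p < L.length → L[i]! = L[i + p]!

lemma hasPeriod_reverse (L : List ℕ) (p : ℕ) (h : HasPeriod L p) : HasPeriod L.reverse p := by
  obtain ⟨hp, h⟩ := h
  refine ⟨hp, fun i hi => ?_⟩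
  have hl : L.reverse.length = L.length := List.length_reverse
  rw [hl] at hi
  have h1 : i < L.reverse.length := by rw [hl]; omega
  have h2 : i + p < L.reverse.length := by rw [hl]; omega
  have key := h (L.length - 1 - (i + p)) (by omega)
  have heq : L.length - 1 - (i + p) + p = L.length - 1 - i := by omega
  rw [heq] at key
  rw [getElem!_pos L (L.length - 1 - (i + p)) (by omega),
      getElem!_pos L (L.length - 1 - i) (by omega)] at key
  refine (getElem!_pos L.reverse i h1).trans (.trans ?_ (getElem!_pos L.reverse (i+p) h2).symm)
  rw [List.getElem_reverse, List.getElem_reverse]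
  exact key.symm

/-- If a string `P` with a period `p` is a palindrome, the string `cP` (for a letter `c`)
has `p` as a period, and the string `Pc'` (for a letter `c'`) does not have `p` as a period,
then the string `S = cPc'` is not a palindrome. -/
theorem stmt3 (P : List ℕ) (c c' : ℕ) (p : ℕ)
    (hPper : HasPeriod P p) (hPpal : P.reverse = P)
    (hcP : HasPeriod (c :: P) p) (hPc : ¬ HasPeriod (P ++ [c']) p) :
    (c :: (P ++ [c'])).reverse ≠ c :: (P ++ [c']) := by
  intro hpal
  have hrw : (c :: (P ++ [c'])).reverse = c' :: (P.reverse ++ [c]) := by simp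
  rw [hrw, hPpal] at hpal
  have hc : c' = c := by
    have := congrArg (fun l => l.headI) hpal
    simpa using this
  subst hc
  have hrev := hasPeriod_reverse _ _ hcP
  have hrw2 : (c' :: P).reverse = P.reverse ++ [c'] := by simp
  rw [hrw2, hPpal] at hrev
  exact hPc hrev
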